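/- Let (𝒳,𝒜) be a symmetric, connected, locally finite directed graph and let j, k : (0,1)×𝒜 → (0,∞) be jump intensities such that for every t ∈ (0,1) and every closed walk c one has χ_c[k](t,c) = χ_c[j](t,c). Then there exists φ : (0,1)×𝒳 → ℝ such that t ↦ φ_t(z) is continuously differentiable for every z ∈ 𝒳 and k(t,z→z') = exp(φ_t(z') − φ_t(z))·j(t,z→z') for every t ∈ (0,1) and every arc (z→z') ∈ 𝒜. -/

import Mathlib

/-- Let `(𝒳, 𝒜)` be a symmetric, connected, locally finite directed graph
(without loops), and let `j`, `k` be positive, continuously `t`-differentiable jump intensities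
(with derivative data `j'`, `k'`) whose closed-walk characteristics coincide for every
`t ∈ (0,1)` and every closed walk.  Then there exists a potential `φ : (0,1) × 𝒳 → ℝ`,
continuously differentiable in time, such that
`k(t, z→z') = exp(φ_t(z') − φ_t(z)) · j(t, z→z')` on every arc. -/
theorem stmt9 {X : Type*} [Countable X] (A : Set (X × X))
    (hsymm : ∀ z z' : X, (z, z') ∈ A → (z', z) ∈ A)
    (hnoloop : ∀ z : X, (z, z) ∉ A)
    (hconn : ∀ x y : X, ∃ (n : ℕ) (w : ℕ → X),
      w 0 = x ∧ w n = y ∧ ∀ i < n, (w i, w (i + 1)) ∈ A)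
    (hfin : ∀ z : X, {z' : X | (z, z') ∈ A}.Finite)
    (j j' k k' : ℝ → X → X → ℝ)
    (hjpos : ∀ t ∈ Set.Ioo (0 : ℝ) 1, ∀ z z' : X, (z, z') ∈ A → 0 < j t z z')
    (hjderiv : ∀ z z' : X, (z, z') ∈ A → ∀ t ∈ Set.Ioo (0 : ℝ) 1,
      HasDerivAt (fun s => j s z z') (j' t z z') t)
    (hjcont : ∀ z z' : X, (z, z') ∈ A →
      ContinuousOn (fun t => j' t z z') (Set.Ioo 0 1))
    (hkpos : ∀ t ∈ Set.Ioo (0 : ℝ) 1, ∀ z z' : X, (z, z') ∈ A → 0 < k t z z')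
    (hkderiv : ∀ z z' : X, (z, z') ∈ A → ∀ t ∈ Set.Ioo (0 : ℝ) 1,
      HasDerivAt (fun s => k s z z') (k' t z z') t)
    (hkcont : ∀ z z' : X, (z, z') ∈ A →
      ContinuousOn (fun t => k' t z z') (Set.Ioo 0 1))
    (hclosed : ∀ t ∈ Set.Ioo (0 : ℝ) 1, ∀ (n : ℕ) (w : ℕ → X), 1 ≤ n →
      (∀ i < n, (w i, w (i + 1)) ∈ A) → w n = w 0 →
      ∏ i ∈ Finset.range n, k t (w i) (w (i + 1)) =
        ∏ i ∈ Finset.range n, j t (w i) (w (i + 1))) :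
    ∃ φ φ' : ℝ → X → ℝ,
      (∀ z : X, (∀ t ∈ Set.Ioo (0 : ℝ) 1, HasDerivAt (fun s => φ s z) (φ' t z) t) ∧
        ContinuousOn (fun t => φ' t z) (Set.Ioo 0 1)) ∧
      (∀ t ∈ Set.Ioo (0 : ℝ) 1, ∀ z z' : X, (z, z') ∈ A →
        k t z z' = Real.exp (φ t z' - φ t z) * j t z z') := by
  rcases isEmpty_or_nonempty X with hE | hN
  · exact ⟨fun _ _ => 0, fun _ _ => 0, fun z => isEmptyElim z,
      fun t ht z => isEmptyElim z⟩
  obtain ⟨x₀⟩ := hN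
  choose n w h0 hend harc using hconn x₀
  set φ : ℝ → X → ℝ := fun t z =>
    ∑ i ∈ Finset.range (n z),
      (Real.log (k t (w z i) (w z (i+1))) - Real.log (j t (w z i) (w z (i+1)))) with hφ
  refine ⟨φ, fun t z => ∑ i ∈ Finset.range (n z),
      (k' t (w z i) (w z (i+1)) / k t (w z i) (w z (i+1))
        - j' t (w z i) (w z (i+1)) / j t (w z i) (w z (i+1))), ?_, ?_⟩
  · intro z
    constructor
    · intro t ht
      apply HasDerivAt.fun_sum
      intro i hi
      have hi' := Finset.mem_range.mp hi
      exact ((hkderiv _ _ (harc z i hi') t ht).log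
          (hkpos t ht _ _ (harc z i hi')).ne').sub
        ((hjderiv _ _ (harc z i hi') t ht).log
          (hjpos t ht _ _ (harc z i hi')).ne')
    · apply continuousOn_finset_sum
      intro i hi
      have hi' := Finset.mem_range.mp hi
      have hkc : ContinuousOn (fun t => k t (w z i) (w z (i+1))) (Set.Ioo 0 1) :=
        fun t ht => ((hkderiv _ _ (harc z i hi') t ht).continuousAt).continuousWithinAt
      have hjc : ContinuousOn (fun t => j t (w z i) (w z (i+1))) (Set.Ioo 0 1) :=
        fun t ht => ((hjderiv _ _ (harc z i hi') t ht).continuousAt).continuousWithinAt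
      exact ((hkcont _ _ (harc z i hi')).div hkc
          (fun t ht => (hkpos t ht _ _ (harc z i hi')).ne')).sub
        ((hjcont _ _ (harc z i hi')).div hjc
          (fun t ht => (hjpos t ht _ _ (harc z i hi')).ne'))
  · intro t ht z z' hzz'
    -- abbreviations for the four products
    set Pk1 := ∏ i ∈ Finset.range (n z), k t (w z i) (w z (i+1)) with hPk1
    set Pj1 := ∏ i ∈ Finset.range (n z), j t (w z i) (w z (i+1)) with hPj1
    set Pk2 := ∏ i ∈ Finset.range (n z'), k t (w z' i) (w z' (i+1)) with hPk2
    set Pj2 := ∏ i ∈ Finset.range (n z'), j t (w z' i) (w z' (i+1)) with hPj2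
    set Qk := ∏ i ∈ Finset.range (n z'), k t (w z' (i+1)) (w z' i) with hQk
    set Qj := ∏ i ∈ Finset.range (n z'), j t (w z' (i+1)) (w z' i) with hQj
    have hPk1pos : 0 < Pk1 :=
      Finset.prod_pos fun i hi => hkpos t ht _ _ (harc z i (Finset.mem_range.mp hi))
    have hPj1pos : 0 < Pj1 :=
      Finset.prod_pos fun i hi => hjpos t ht _ _ (harc z i (Finset.mem_range.mp hi))
    have hPk2pos : 0 < Pk2 :=
      Finset.prod_pos fun i hi => hkpos t ht _ _ (harc z' i (Finset.mem_range.mp hi))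
    have hPj2pos : 0 < Pj2 :=
      Finset.prod_pos fun i hi => hjpos t ht _ _ (harc z' i (Finset.mem_range.mp hi))
    have hQjpos : 0 < Qj :=
      Finset.prod_pos fun i hi =>
        hjpos t ht _ _ (hsymm _ _ (harc z' i (Finset.mem_range.mp hi)))
    -- exponential of the potential equals the ratio of products
    have hexp : ∀ y : X, Real.exp (φ t y) =
        (∏ i ∈ Finset.range (n y), k t (w y i) (w y (i+1))) /
        (∏ i ∈ Finset.range (n y), j t (w y i) (w y (i+1))) := by
      intro y
      rw [hφ, Real.exp_sum, ← Finset.prod_div_distrib]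
      refine Finset.prod_congr rfl fun i hi => ?_
      have hi' := Finset.mem_range.mp hi
      rw [Real.exp_sub, Real.exp_log (hkpos t ht _ _ (harc y i hi')),
        Real.exp_log (hjpos t ht _ _ (harc y i hi'))]
    -- two-cycle identity
    have h2 : ∀ a b : X, (a, b) ∈ A → k t a b * k t b a = j t a b * j t b a := by
      intro a b hab
      have := hclosed t ht 2 (fun i => if i = 1 then b else a) (by norm_num)
        (by intro i hi; interval_cases i <;> simp [hab, hsymm a b hab])
        (by simp)
      simpa [Finset.prod_range_succ] using this
    -- the concatenated closed walk
    set W : ℕ → X := fun i => if i ≤ n z then w z i else w z' (n z + 1 + n z' - i) with hW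
    have hW0 : W 0 = x₀ := by simp [hW, h0]
    have hWN : W (n z + 1 + n z') = x₀ := by
      simp only [hW]
      rw [if_neg (by omega)]
      have : n z + 1 + n z' - (n z + 1 + n z') = 0 := by omega
      rw [this, h0]
    have harcW : ∀ i < n z + 1 + n z', (W i, W (i+1)) ∈ A := by
      intro i hi
      rcases lt_trichotomy i (n z) with h | h | h
      · have e1 : W i = w z i := if_pos (le_of_lt h)
        have e2 : W (i+1) = w z (i+1) := if_pos (by omega)
        rw [e1, e2]; exact harc z i h
      · have e1 : W i = w z i := if_pos (le_of_eq h)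
        have e2 : W (i+1) = w z' (n z') := by
          simp only [hW]; rw [if_neg (by omega)]
          congr 1; omega
        rw [e1, e2, h, hend, hend]; exact hzz'
      · have e1 : W i = w z' (n z + 1 + n z' - i) := by
          simp only [hW]; rw [if_neg (by omega)]
        have e2 : W (i+1) = w z' (n z + n z' - i) := by
          simp only [hW]; rw [if_neg (by omega)]
          congr 1; omega
        have hrw : n z + 1 + n z' - i = (n z + n z' - i) + 1 := by omega
        rw [e1, e2, hrw]
        exact hsymm _ _ (harc z' (n z + n z' - i) (by omega))
    -- split the product along the closed walk
    have hsplit : ∀ F : ℝ → X → X → ℝ,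
        ∏ i ∈ Finset.range (n z + 1 + n z'), F t (W i) (W (i+1)) =
        (∏ i ∈ Finset.range (n z), F t (w z i) (w z (i+1))) * F t z z' *
        ∏ i ∈ Finset.range (n z'), F t (w z' (i+1)) (w z' i) := by
      intro F
      rw [Finset.prod_range_add, Finset.prod_range_succ]
      have hrefl := Finset.prod_range_reflect
        (fun i0 => F t (w z' (i0+1)) (w z' i0)) (n z')
      congr 1
      · congr 1
        · refine Finset.prod_congr rfl fun i hi => ?_
          have hi' := Finset.mem_range.mp hi
          rw [show W i = w z i from if_pos (by omega),
            show W (i+1) = w z (i+1) from if_pos (by omega)]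
        · have e1 : W (n z) = w z (n z) := if_pos le_rfl
          have e2 : W (n z + 1) = w z' (n z') := by
            simp only [hW]; rw [if_neg (by omega)]
            congr 1; omega
          rw [e1, e2, hend, hend]
      · rw [← hrefl]
        refine Finset.prod_congr rfl fun i hi => ?_
        have hi' := Finset.mem_range.mp hi
        have e1 : W (n z + 1 + i) = w z' (n z' - i) := by
          simp only [hW]; rw [if_neg (by omega)]
          congr 1; omega
        have e2 : W (n z + 1 + i + 1) = w z' (n z' - i - 1) := by
          simp only [hW]; rw [if_neg (by omega)]
          congr 1; omega
        rw [e1, e2]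
        congr 2 <;> omega
    have hprodeq := hclosed t ht (n z + 1 + n z') W (by omega) harcW (by rw [hWN, hW0])
    rw [hsplit k, hsplit j] at hprodeq
    -- reversing loses the k/j ratio
    have h2prod : Qk * Pk2 = Qj * Pj2 := by
      rw [hQk, hQj, hPk2, hPj2, ← Finset.prod_mul_distrib, ← Finset.prod_mul_distrib]
      refine Finset.prod_congr rfl fun i hi => ?_
      have hi' := Finset.mem_range.mp hi
      linear_combination h2 _ _ (harc z' i hi')
    have hQjne : Qj ≠ 0 := hQjpos.ne'
    have key : k t z z' * (Pj2 * Pk1) = Pk2 * Pj1 * j t z z' := by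
      apply mul_left_cancel₀ hQjne
      linear_combination Pk2 * hprodeq - k t z z' * Pk1 * h2prod
    rw [Real.exp_sub, hexp z', hexp z]
    rw [← hPk1, ← hPj1, ← hPk2, ← hPj2]
    field_simp
    linear_combination key
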